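/- Suppose (f_{i,1},...,f_{i,K}), i = 1,...,Q are mutually independent multinomial random vectors, each Multinomial(M, p_i), and a_{i,k} ∈ ℝ are arbitrary fixed constants. Then for every t > 0, P(Σ_{i,k} a_{i,k}(f_{i,k}/M − p_{i,k}) > t) ≤ exp(−(Mt/(4a_max)) min{1, a_max t / (4 Σ_{i,k} a_{i,k}² p_{i,k})}) + exp(−M²t² / (8 Σ_{i,k} a_{i,k}² p_{i,k})), where a_max = max_{i,k} |a_{i,k}|. -/

import Mathlib

open MeasureTheory

/-- The categorical distribution on `Fin K` with probabilities `p`. -/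
noncomputable def catMeasure {K : ℕ} (p : Fin K → ℝ) : Measure (Fin K) :=
  ∑ k, ENNReal.ofReal (p k) • Measure.dirac k

/-- The law of `Q` mutually independent blocks of `M` i.i.d. categorical trials;
the counts of block `i` form a `Multinomial(M, p i)` random vector. -/
noncomputable def multinomialFamily {Q K M : ℕ} (p : Fin Q → Fin K → ℝ) :
    Measure (Fin Q → Fin M → Fin K) :=
  Measure.pi fun i => Measure.pi fun _ : Fin M => catMeasure (p i)

/-- The multinomial count `f_{i,k}`. -/
def mcount {Q K M : ℕ} (ω : Fin Q → Fin M → Fin K) (i : Fin Q) (k : Fin K) : ℕ :=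
  (Finset.univ.filter fun m => ω i m = k).card

/-- `a_max = max_{i,k} |a_{i,k}|`. -/
noncomputable def amaxAbs {Q K : ℕ} (a : Fin (Q + 1) → Fin (K + 1) → ℝ) : ℝ :=
  Finset.univ.sup' Finset.univ_nonempty
    (fun ik : Fin (Q + 1) × Fin (K + 1) => |a ik.1 ik.2|)

/- ### Auxiliary lemmas -/

instance catFinite {K : ℕ} (p : Fin K → ℝ) : IsFiniteMeasure (catMeasure p) := by
  constructor
  rw [catMeasure, Measure.finset_sum_apply]
  refine ENNReal.sum_lt_top.2 fun k _ => ?_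
  simp [Measure.smul_apply]

lemma cat_singleton {K : ℕ} (p : Fin K → ℝ) (k : Fin K) :
    catMeasure p {k} = ENNReal.ofReal (p k) := by
  rw [catMeasure, Measure.finset_sum_apply]
  simp [Measure.smul_apply, Measure.dirac_apply, Set.indicator_apply, mul_ite,
    Finset.sum_ite_eq']

lemma family_singleton {Q K M : ℕ} (p : Fin Q → Fin K → ℝ)
    (hp0 : ∀ i k, 0 ≤ p i k) (ω : Fin Q → Fin M → Fin K) :
    multinomialFamily (M := M) p {ω} = ENNReal.ofReal (∏ i, ∏ m, p i (ω i m)) := by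
  rw [multinomialFamily, ← Set.univ_pi_singleton ω, Measure.pi_pi]
  have h1 : ∀ i, (Measure.pi fun _ : Fin M => catMeasure (p i)) {ω i}
      = ENNReal.ofReal (∏ m, p i (ω i m)) := by
    intro i
    rw [← Set.univ_pi_singleton (ω i), Measure.pi_pi]
    simp_rw [cat_singleton]
    rw [ENNReal.ofReal_prod_of_nonneg fun m _ => hp0 i (ω i m)]
  simp_rw [h1]
  rw [ENNReal.ofReal_prod_of_nonneg fun i _ => Finset.prod_nonneg fun m _ => hp0 i (ω i m)]

lemma exp_quad {x : ℝ} (hx : |x| ≤ 1) : Real.exp x ≤ 1 + x + x ^ 2 := by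
  have h := Real.exp_bound hx (n := 2) (by norm_num)
  have h2 : (∑ m ∈ Finset.range 2, x ^ m / m.factorial) = 1 + x := by
    simp [Finset.sum_range_succ, Nat.factorial]
  rw [h2] at h
  have h3 := (abs_sub_le_iff.1 h).1
  have h4 : |x| ^ 2 * ((Nat.succ 2 : ℕ) / ((Nat.factorial 2 : ℕ) * (2:ℕ) : ℝ)) ≤ x ^ 2 := by
    rw [sq_abs]
    norm_num [Nat.factorial]
    nlinarith [sq_nonneg x]
  push_cast at h3 h4
  nlinarith [h3, h4]

lemma swap_sum {Q K M : ℕ} (g : Fin (Q+1) → Fin (K+1) → ℝ) :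
    ∑ ω : Fin (Q+1) → Fin M → Fin (K+1), ∏ i, ∏ m, g i (ω i m)
      = ∏ i, (∑ k, g i k) ^ M := by
  classical
  rw [← Fintype.prod_sum (f := fun (i : Fin (Q+1)) (v : Fin M → Fin (K+1)) => ∏ m, g i (v m))]
  refine Finset.prod_congr rfl fun i _ => ?_
  rw [← Fintype.prod_sum (f := fun (_ : Fin M) (k : Fin (K+1)) => g i k)]
  simp

lemma mgf_bound {K : ℕ} (p a : Fin (K+1) → ℝ) (hp0 : ∀ k, 0 ≤ p k) (hp1 : ∑ k, p k = 1)
    (A lam : ℝ) (hA : ∀ k, |a k| ≤ A) (hl0 : 0 < lam) (hlA : lam * (2*A) ≤ 1) :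
    ∑ k, p k * Real.exp (lam * (a k - ∑ k', a k' * p k'))
      ≤ Real.exp (lam ^ 2 * ∑ k, (a k) ^ 2 * p k) := by
  set ab := ∑ k', a k' * p k' with hab
  have habs : |ab| ≤ A := by
    calc |ab| ≤ ∑ k, |a k * p k| := Finset.abs_sum_le_sum_abs _ _
      _ ≤ ∑ k, A * p k := Finset.sum_le_sum fun k _ => by
          rw [abs_mul, abs_of_nonneg (hp0 k)]
          exact mul_le_mul_of_nonneg_right (hA k) (hp0 k)
      _ = A := by rw [← Finset.mul_sum, hp1, mul_one]
  have hY : ∀ k, |a k - ab| ≤ 2 * A := fun k => by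
    calc |a k - ab| ≤ |a k| + |ab| := abs_sub _ _
      _ ≤ 2 * A := by linarith [hA k]
  have hx : ∀ k, |lam * (a k - ab)| ≤ 1 := fun k => by
    rw [abs_mul, abs_of_pos hl0]
    calc lam * |a k - ab| ≤ lam * (2 * A) :=
          mul_le_mul_of_nonneg_left (hY k) hl0.le
      _ ≤ 1 := hlA
  have hpY : ∑ k, p k * (a k - ab) = 0 := by
    simp_rw [mul_sub]
    rw [Finset.sum_sub_distrib, ← Finset.sum_mul, hp1, one_mul, hab]
    rw [sub_eq_zero]
    exact Finset.sum_congr rfl fun k _ => mul_comm _ _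
  have hpY2 : ∑ k, p k * (a k - ab) ^ 2 ≤ ∑ k, (a k) ^ 2 * p k := by
    have expand : ∑ k, p k * (a k - ab) ^ 2
        = (∑ k, (a k) ^ 2 * p k) - ab ^ 2 := by
      have e : ∀ k, p k * (a k - ab) ^ 2
          = (a k) ^ 2 * p k - 2 * ab * (a k * p k) + ab ^ 2 * p k := fun k => by ring
      rw [Finset.sum_congr rfl fun k _ => e k, Finset.sum_add_distrib,
        Finset.sum_sub_distrib, ← Finset.mul_sum, ← Finset.mul_sum, hp1, ← hab]
      ring
    nlinarith [sq_nonneg ab]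
  calc ∑ k, p k * Real.exp (lam * (a k - ab))
      ≤ ∑ k, p k * (1 + lam * (a k - ab) + (lam * (a k - ab)) ^ 2) :=
        Finset.sum_le_sum fun k _ =>
          mul_le_mul_of_nonneg_left (exp_quad (hx k)) (hp0 k)
    _ = 1 + lam * ∑ k, p k * (a k - ab) + lam ^ 2 * ∑ k, p k * (a k - ab) ^ 2 := by
        have e2 : ∑ k, p k * (1 + lam * (a k - ab) + (lam * (a k - ab)) ^ 2)
            = (∑ k, p k) + lam * ∑ k, p k * (a k - ab)
              + lam ^ 2 * ∑ k, p k * (a k - ab) ^ 2 := by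
          rw [Finset.mul_sum, Finset.mul_sum, ← Finset.sum_add_distrib,
            ← Finset.sum_add_distrib]
          exact Finset.sum_congr rfl fun k _ => by ring
        rw [e2, hp1]
    _ = 1 + lam ^ 2 * ∑ k, p k * (a k - ab) ^ 2 := by rw [hpY]; ring
    _ ≤ 1 + lam ^ 2 * ∑ k, (a k) ^ 2 * p k := by nlinarith [sq_nonneg lam]
    _ ≤ Real.exp (lam ^ 2 * ∑ k, (a k) ^ 2 * p k) := by
        rw [add_comm]
        exact Real.add_one_le_exp _

lemma expo_alg (A V t M : ℝ) (hA : 0 < A) (hV : 0 < V) (ht : 0 < t) (hM : 0 < M) :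
    -(min (1/(2*A)) (t/(4*V)) * (M*t)) + (min (1/(2*A)) (t/(4*V))) ^ 2 * (M*V)
      ≤ -(M * t / (4 * A)) * min 1 (A * t / (4 * V)) := by
  set lam := min (1/(2*A)) (t/(4*V)) with hlam
  have hl0 : 0 < lam := lt_min (by positivity) (by positivity)
  have hl2 : lam ≤ t/(4*V) := min_le_right _ _
  have hlV : lam * V ≤ t/4 := by
    calc lam * V ≤ (t/(4*V)) * V := mul_le_mul_of_nonneg_right hl2 hV.le
      _ = t/4 := by field_simp
  have step1 : -(lam * (M*t)) + lam ^ 2 * (M*V) ≤ -(3/4) * (lam * (M * t)) := by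
    have key : lam * M * (lam * V) ≤ lam * M * (t/4) :=
      mul_le_mul_of_nonneg_left hlV (by positivity)
    nlinarith [key]
  refine le_trans step1 ?_
  rw [neg_mul, neg_mul, neg_le_neg_iff]
  rcases le_total (A*t/(4*V)) 1 with h | h
  · rw [min_eq_right h]
    have h' : A * t ≤ 4 * V := (div_le_one (by positivity)).mp h
    have hlow : t/(12*V) ≤ lam := by
      refine le_min ?_ ?_
      · rw [div_le_div_iff₀ (by positivity) (by positivity)]
        nlinarith
      · rw [div_le_div_iff₀ (by positivity) (by positivity)]
        nlinarith [mul_pos ht hV]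
    have h16 : t/(16*V) ≤ 3/4 * lam := by
      have e : t/(16*V) = 3/4 * (t/(12*V)) := by field_simp; ring
      rw [e]
      nlinarith [hlow]
    calc M*t/(4*A) * (A*t/(4*V)) = (M*t) * (t/(16*V)) := by field_simp; ring
      _ ≤ (M*t) * (3/4 * lam) := mul_le_mul_of_nonneg_left h16 (by positivity)
      _ = 3/4 * (lam*(M*t)) := by ring
  · rw [min_eq_left h]
    have h' : 4 * V ≤ A * t := by
      rw [le_div_iff₀ (by positivity)] at h; linarith
    have hlameq : lam = 1/(2*A) := by
      rw [hlam, min_eq_left]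
      rw [div_le_div_iff₀ (by positivity) (by positivity)]
      nlinarith
    have h14 : (1:ℝ)/(4*A) ≤ 3/4 * lam := by
      rw [hlameq]
      have e : (3:ℝ)/4 * (1/(2*A)) = 3/(8*A) := by field_simp; ring
      rw [e, div_le_div_iff₀ (by positivity) (by positivity)]
      nlinarith
    calc M*t/(4*A) * 1 = (M*t) * (1/(4*A)) := by ring
      _ ≤ (M*t) * (3/4 * lam) := mul_le_mul_of_nonneg_left h14 (by positivity)
      _ = 3/4 * (lam*(M*t)) := by ring

/-- two-sided-coefficient concentration for linear functionals of
independent multinomial random vectors: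
`P(Σ_{i,k} a_{i,k}(f_{i,k}/M − p_{i,k}) > t)
  ≤ exp(−(Mt/(4a_max)) min{1, a_max t/(4 Σ a²p)}) + exp(−M²t²/(8 Σ a²p))`. -/
theorem multinomial_general_tail {Q K M : ℕ} (hM : 0 < M)
    (p : Fin (Q + 1) → Fin (K + 1) → ℝ)
    (hp0 : ∀ i k, 0 ≤ p i k) (hp1 : ∀ i, ∑ k, p i k = 1)
    (a : Fin (Q + 1) → Fin (K + 1) → ℝ) (hamax : 0 < amaxAbs a)
    (hap2 : 0 < ∑ i, ∑ k, (a i k) ^ 2 * p i k)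
    (t : ℝ) (ht : 0 < t) :
    multinomialFamily (M := M) p
        {ω | t < ∑ i, ∑ k, a i k * ((mcount ω i k : ℝ) / M - p i k)} ≤
      ENNReal.ofReal (Real.exp (-(M * t / (4 * amaxAbs a)) *
          min 1 (amaxAbs a * t / (4 * ∑ i, ∑ k, (a i k) ^ 2 * p i k))) +
        Real.exp (-((M : ℝ) ^ 2 * t ^ 2) /
          (8 * ∑ i, ∑ k, (a i k) ^ 2 * p i k))) := by
  classical
  set A := amaxAbs a with hA
  set V := ∑ i, ∑ k, (a i k) ^ 2 * p i k with hV
  have hMR : (0:ℝ) < M := by exact_mod_cast hM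
  set lam := min (1/(2*A)) (t/(4*V)) with hlam
  have hl0 : 0 < lam := lt_min (by positivity) (by positivity)
  set Y : Fin (Q+1) → Fin (K+1) → ℝ := fun i k => a i k - ∑ k', a i k' * p i k' with hY
  set D : (Fin (Q+1) → Fin M → Fin (K+1)) → ℝ := fun ω => ∑ i, ∑ m, Y i (ω i m) with hD
  -- rewrite the event in terms of `D`
  have hsetid : {ω : Fin (Q+1) → Fin M → Fin (K+1) |
      t < ∑ i, ∑ k, a i k * ((mcount ω i k : ℝ) / M - p i k)}
      = {ω | (M:ℝ) * t < D ω} := by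
    ext ω
    simp only [Set.mem_setOf_eq]
    have hTi : ∀ i, ∑ k, a i k * (mcount ω i k : ℝ) = ∑ m, a i (ω i m) := by
      intro i
      calc ∑ k, a i k * (mcount ω i k : ℝ)
          = ∑ k, ∑ m, (if ω i m = k then a i k else 0) := by
            refine Finset.sum_congr rfl fun k _ => ?_
            rw [mcount, Finset.card_filter]
            push_cast
            rw [Finset.mul_sum]
            refine Finset.sum_congr rfl fun m _ => ?_
            split <;> simp
        _ = ∑ m, ∑ k, (if ω i m = k then a i k else 0) := Finset.sum_comm
        _ = ∑ m, a i (ω i m) := by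
            refine Finset.sum_congr rfl fun m _ => ?_
            simp
    have key : (∑ i, ∑ k, a i k * ((mcount ω i k : ℝ) / M - p i k)) = D ω / M := by
      rw [hD]
      simp only []
      rw [Finset.sum_div]
      refine Finset.sum_congr rfl fun i _ => ?_
      have e1 : ∑ m, Y i (ω i m)
          = (∑ k, a i k * (mcount ω i k : ℝ)) - (M:ℝ) * (∑ k', a i k' * p i k') := by
        simp only [hY]
        rw [Finset.sum_sub_distrib, Finset.sum_const, Finset.card_univ,
          Fintype.card_fin, nsmul_eq_mul, ← hTi i]
      have e2 : ∀ k, a i k * ((mcount ω i k : ℝ)/M - p i k)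
          = a i k * (mcount ω i k : ℝ)/M - a i k * p i k := fun k => by ring
      rw [Finset.sum_congr rfl fun k _ => e2 k, Finset.sum_sub_distrib,
        ← Finset.sum_div, e1, sub_div,
        mul_div_cancel_left₀ _ (ne_of_gt hMR)]
    rw [key, lt_div_iff₀ hMR, mul_comm t (M:ℝ)]
  -- the measure as a finite sum
  set W : (Fin (Q+1) → Fin M → Fin (K+1)) → ℝ := fun ω => ∏ i, ∏ m, p i (ω i m) with hW
  have hW0 : ∀ ω, 0 ≤ W ω := fun ω =>
    Finset.prod_nonneg fun i _ => Finset.prod_nonneg fun m _ => hp0 _ _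
  set s : Finset (Fin (Q+1) → Fin M → Fin (K+1)) :=
    Finset.univ.filter (fun ω => (M:ℝ)*t < D ω) with hs
  have hmeas : multinomialFamily (M := M) p {ω | (M:ℝ)*t < D ω}
      = ENNReal.ofReal (∑ ω ∈ s, W ω) := by
    have hcoe : {ω : Fin (Q+1) → Fin M → Fin (K+1) | (M:ℝ)*t < D ω} = (↑s : Set _) := by
      ext ω; simp [hs]
    rw [hcoe]
    have hun : (↑s : Set (Fin (Q+1) → Fin M → Fin (K+1))) = ⋃ ω ∈ s, {ω} := by
      ext x; simp
    rw [hun, measure_biUnion_finset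
      (fun x _ y _ hxy => by simp [Function.onFun, Set.disjoint_singleton, hxy])
      (fun ω _ => measurableSet_singleton ω)]
    rw [ENNReal.ofReal_sum_of_nonneg fun ω _ => hW0 ω]
    exact Finset.sum_congr rfl fun ω _ => family_singleton p hp0 ω
  -- Chernoff bound
  set g : Fin (Q+1) → Fin (K+1) → ℝ := fun i k => p i k * Real.exp (lam * Y i k) with hg
  have hAk : ∀ i k, |a i k| ≤ A := by
    intro i k
    simp only [hA, amaxAbs]
    exact Finset.le_sup' (fun ik : Fin (Q+1) × Fin (K+1) => |a ik.1 ik.2|)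
      (Finset.mem_univ (i, k))
  have hlA : lam * (2*A) ≤ 1 := by
    have h1 : lam ≤ 1/(2*A) := min_le_left _ _
    rw [le_div_iff₀ (by positivity)] at h1
    linarith
  have mgf : ∀ i, ∑ k, g i k ≤ Real.exp (lam^2 * ∑ k, (a i k)^2 * p i k) := by
    intro i
    simp only [hg, hY]
    exact mgf_bound (p i) (a i) (hp0 i) (hp1 i) A lam (fun k => hAk i k) hl0 hlA
  have chern : ∑ ω ∈ s, W ω ≤ Real.exp (-(lam*((M:ℝ)*t)) + lam^2*((M:ℝ)*V)) := by
    have step1 : ∑ ω ∈ s, W ω ≤ ∑ ω ∈ s, W ω * Real.exp (lam * (D ω - (M:ℝ)*t)) := by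
      refine Finset.sum_le_sum fun ω hω => ?_
      rw [hs, Finset.mem_filter] at hω
      have h1 : (1:ℝ) ≤ Real.exp (lam * (D ω - (M:ℝ)*t)) := by
        calc (1:ℝ) = Real.exp 0 := Real.exp_zero.symm
          _ ≤ _ := Real.exp_le_exp.2 (mul_nonneg hl0.le (by linarith [hω.2]))
      exact le_mul_of_one_le_right (hW0 ω) h1
    have step3 : ∀ ω, W ω * Real.exp (lam * (D ω - (M:ℝ)*t))
        = Real.exp (-(lam*((M:ℝ)*t))) * ∏ i, ∏ m, g i (ω i m) := by
      intro ω
      have e1 : lam * (D ω - (M:ℝ)*t) = -(lam*((M:ℝ)*t)) + lam * D ω := by ring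
      rw [e1, Real.exp_add]
      have e2 : Real.exp (lam * D ω) = ∏ i, ∏ m, Real.exp (lam * Y i (ω i m)) := by
        rw [hD]
        simp only []
        rw [Finset.mul_sum, Real.exp_sum]
        refine Finset.prod_congr rfl fun i _ => ?_
        rw [Finset.mul_sum, Real.exp_sum]
      rw [e2, hW, hg]
      simp only []
      have e3 : ∏ i, ∏ m, p i (ω i m) * Real.exp (lam * Y i (ω i m))
          = (∏ i, ∏ m, p i (ω i m)) * ∏ i, ∏ m, Real.exp (lam * Y i (ω i m)) := by
        rw [← Finset.prod_mul_distrib]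
        exact Finset.prod_congr rfl fun i _ => Finset.prod_mul_distrib
      rw [e3]
      ring
    have step5 : ∏ i, (∑ k, g i k)^M ≤ Real.exp (lam^2*((M:ℝ)*V)) := by
      calc ∏ i, (∑ k, g i k)^M
          ≤ ∏ i, (Real.exp (lam^2 * ∑ k, (a i k)^2 * p i k))^M := by
            refine Finset.prod_le_prod
              (fun i _ => pow_nonneg (Finset.sum_nonneg fun k _ =>
                mul_nonneg (hp0 i k) (Real.exp_pos _).le) M)
              (fun i _ => pow_le_pow_left₀ (Finset.sum_nonneg fun k _ =>
                mul_nonneg (hp0 i k) (Real.exp_pos _).le) (mgf i) M)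
        _ = Real.exp (lam^2*((M:ℝ)*V)) := by
            simp_rw [← Real.exp_nat_mul]
            rw [← Real.exp_sum]
            congr 1
            rw [hV, Finset.mul_sum]
            rw [Finset.mul_sum]
            exact Finset.sum_congr rfl fun i _ => by ring
    calc ∑ ω ∈ s, W ω
        ≤ ∑ ω ∈ s, W ω * Real.exp (lam * (D ω - (M:ℝ)*t)) := step1
      _ ≤ ∑ ω : Fin (Q+1) → Fin M → Fin (K+1), W ω * Real.exp (lam * (D ω - (M:ℝ)*t)) :=
          Finset.sum_le_sum_of_subset_of_nonneg (Finset.subset_univ s)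
            (fun ω _ _ => mul_nonneg (hW0 ω) (Real.exp_pos _).le)
      _ = Real.exp (-(lam*((M:ℝ)*t))) * ∑ ω : Fin (Q+1) → Fin M → Fin (K+1),
            ∏ i, ∏ m, g i (ω i m) := by
          rw [Finset.mul_sum]
          exact Finset.sum_congr rfl fun ω _ => step3 ω
      _ = Real.exp (-(lam*((M:ℝ)*t))) * ∏ i, (∑ k, g i k)^M := by rw [swap_sum]
      _ ≤ Real.exp (-(lam*((M:ℝ)*t))) * Real.exp (lam^2*((M:ℝ)*V)) :=
          mul_le_mul_of_nonneg_left step5 (Real.exp_pos _).le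
      _ = Real.exp (-(lam*((M:ℝ)*t)) + lam^2*((M:ℝ)*V)) := (Real.exp_add _ _).symm
  -- assemble
  rw [hsetid, hmeas]
  have final1 : ∑ ω ∈ s, W ω
      ≤ Real.exp (-((M:ℝ) * t / (4 * A)) * min 1 (A * t / (4 * V))) := by
    refine chern.trans (Real.exp_le_exp.2 ?_)
    have := expo_alg A V t (M:ℝ) hamax hap2 ht hMR
    rw [hlam]
    convert this using 2
  refine le_trans (ENNReal.ofReal_le_ofReal final1) (ENNReal.ofReal_le_ofReal ?_)
  have h2 := (Real.exp_pos (-((M:ℝ)^2 * t^2)/(8*V))).le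
  linarith
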